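/- Let m ≥ 1 be an integer and 0 < a < 1. Define Φ_{S3}(m,a;t) = 4π² cosh(t/4) (4 cosh²(t/m) − 4a²)^m e^{−2π cosh t}. Then lim_{t→+∞} Φ_{S3}(m,a;t)/Φ(t) = 1, where Φ(t) = Σ_{n=1}^{∞} (2π² n⁴ e^{9t/4} − 3π n² e^{5t/4}) e^{−π n² e^t}. -/

import Mathlib

open Real Filter

/-- The Riemann xi kernel
`Φ(t) = ∑_{n=1}^{∞} (2π² n⁴ e^{9t/4} − 3π n² e^{5t/4}) e^{−π n² e^t}`. -/
noncomputable def Phi (t : ℝ) : ℝ :=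
  ∑' n : ℕ,
    (2 * π ^ 2 * (n + 1 : ℝ) ^ 4 * exp (9 * t / 4)
      - 3 * π * (n + 1 : ℝ) ^ 2 * exp (5 * t / 4)) * exp (-π * (n + 1 : ℝ) ^ 2 * exp t)

/-- The approximating kernel
`Φ_{S3}(m,a;t) = 4π² cosh(t/4) (4 cosh²(t/m) − 4a²)^m e^{−2π cosh t}`. -/
noncomputable def PhiS3 (m : ℕ) (a t : ℝ) : ℝ :=
  4 * π ^ 2 * cosh (t / 4) * (4 * cosh (t / m) ^ 2 - 4 * a ^ 2) ^ m * exp (-2 * π * cosh t)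

noncomputable def phiTerm (t : ℝ) (n : ℕ) : ℝ :=
  (2 * π ^ 2 * (n + 1 : ℝ) ^ 4 * exp (9 * t / 4)
      - 3 * π * (n + 1 : ℝ) ^ 2 * exp (5 * t / 4)) * exp (-π * (n + 1 : ℝ) ^ 2 * exp t)

lemma summable_aux (x : ℝ) (hx0 : 0 ≤ x) (hx1 : x < 1) :
    Summable (fun n : ℕ => ((n : ℝ) + 1) ^ 4 * x ^ (n + 1)) := by
  have h : Summable (fun n : ℕ => (n : ℝ) ^ 4 * x ^ n) := by
    simpa using summable_pow_mul_geometric_of_norm_lt_one 4 (r := x) (by rwa [Real.norm_eq_abs, abs_of_nonneg hx0])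
  have := (summable_nat_add_iff 1).2 h
  simpa [add_comm] using this

lemma expnegpow (t : ℝ) (k : ℕ) :
    exp (-π * (k : ℝ) ^ 2 * exp t) = exp (-π * exp t) ^ (k ^ 2) := by
  rw [← Real.exp_nat_mul]
  push_cast
  ring_nf

lemma summable_phiTerm (t : ℝ) : Summable (phiTerm t) := by
  set x := exp (-π * exp t) with hx
  have hx0 : 0 < x := exp_pos _
  have hx1 : x < 1 := by
    rw [hx, exp_lt_one_iff]
    have := Real.pi_pos
    have := exp_pos t
    nlinarith
  apply Summable.of_norm_bounded
    (g := fun n : ℕ => (2 * π ^ 2 * exp (9 * t / 4) + 3 * π * exp (5 * t / 4)) * (((n : ℝ) + 1) ^ 4 * x ^ (n + 1)))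
  · exact (summable_aux x hx0.le hx1).mul_left _
  · intro n
    have hpi := Real.pi_pos
    have h1 : (1 : ℝ) ≤ (n : ℝ) + 1 := by linarith [Nat.cast_nonneg (α := ℝ) n]
    have hpow : exp (-π * ((n : ℝ) + 1) ^ 2 * exp t) ≤ x ^ (n + 1) := by
      have : exp (-π * ((n : ℝ) + 1) ^ 2 * exp t) = x ^ ((n + 1) ^ 2) := by
        have := expnegpow t (n + 1)
        push_cast at this ⊢
        rw [this]
      rw [this]
      exact pow_le_pow_of_le_one hx0.le hx1.le (Nat.le_self_pow two_ne_zero (n + 1))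
    rw [phiTerm, norm_mul, Real.norm_eq_abs, Real.norm_eq_abs, abs_of_pos (exp_pos _)]
    have habs : |2 * π ^ 2 * ((n : ℝ) + 1) ^ 4 * exp (9 * t / 4) - 3 * π * ((n : ℝ) + 1) ^ 2 * exp (5 * t / 4)|
        ≤ (2 * π ^ 2 * exp (9 * t / 4) + 3 * π * exp (5 * t / 4)) * ((n : ℝ) + 1) ^ 4 := by
      have h24 : ((n : ℝ) + 1) ^ 2 ≤ ((n : ℝ) + 1) ^ 4 := pow_le_pow_right₀ h1 (by norm_num)
      have key := mul_le_mul_of_nonneg_left h24 (by positivity : (0:ℝ) ≤ 3 * π * exp (5 * t / 4))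
      have e1 := exp_pos (9 * t / 4); have e2 := exp_pos (5 * t / 4)
      have pp : (0:ℝ) < ((n : ℝ) + 1) ^ 2 := by positivity
      have pp4 : (0:ℝ) < ((n : ℝ) + 1) ^ 4 := by positivity
      rw [abs_sub_le_iff]
      have q1 : (0:ℝ) < 3 * π * exp (5 * t / 4) * ((n : ℝ) + 1) ^ 2 := by positivity
      have q2 : (0:ℝ) < 3 * π * exp (5 * t / 4) * ((n : ℝ) + 1) ^ 4 := by positivity
      have q3 : (0:ℝ) < 2 * π ^ 2 * exp (9 * t / 4) * ((n : ℝ) + 1) ^ 4 := by positivity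
      constructor
      · nlinarith
      · nlinarith
    calc |2 * π ^ 2 * ((n : ℝ) + 1) ^ 4 * exp (9 * t / 4) - 3 * π * ((n : ℝ) + 1) ^ 2 * exp (5 * t / 4)| *
          exp (-π * ((n : ℝ) + 1) ^ 2 * exp t)
        ≤ ((2 * π ^ 2 * exp (9 * t / 4) + 3 * π * exp (5 * t / 4)) * ((n : ℝ) + 1) ^ 4) * (x ^ (n + 1)) := by
          apply mul_le_mul habs hpow (exp_pos _).le
          positivity
      _ = (2 * π ^ 2 * exp (9 * t / 4) + 3 * π * exp (5 * t / 4)) * (((n : ℝ) + 1) ^ 4 * x ^ (n + 1)) := by ring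

noncomputable def PhiS3' (m : ℕ) (a t : ℝ) : ℝ :=
  4 * π ^ 2 * cosh (t / 4) * (4 * cosh (t / m) ^ 2 - 4 * a ^ 2) ^ m * exp (-2 * π * cosh t)

lemma cosh_mul_exp_neg (s : ℝ) : cosh s * exp (-s) = (1 + exp (-(2 * s))) / 2 := by
  rw [Real.cosh_eq, div_mul_eq_mul_div, add_mul, ← Real.exp_add, ← Real.exp_add]
  norm_num
  rw [show -s + -s = -(2*s) by ring]

lemma tendsto_exp_neg_comp {f : ℝ → ℝ} (hf : Tendsto f atTop atTop) :
    Tendsto (fun t => exp (-(f t))) atTop (nhds 0) :=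
  Real.tendsto_exp_neg_atTop_nhds_zero.comp hf

lemma tendsto_PhiS3_norm (m : ℕ) (hm : 1 ≤ m) (a : ℝ) :
    Tendsto (fun t => PhiS3' m a t * exp (π * exp t - 9 * t / 4)) atTop (nhds (2 * π ^ 2)) := by
  have hm0 : (m : ℝ) ≠ 0 := Nat.cast_ne_zero.2 (by omega)
  have hmpos : (0:ℝ) < m := by positivity
  have key : ∀ t, PhiS3' m a t * exp (π * exp t - 9 * t / 4)
      = 4 * π ^ 2 * (cosh (t / 4) * exp (-(t / 4)))
        * ((4 * cosh (t / m) ^ 2 - 4 * a ^ 2) * exp (-(2 * (t / m)))) ^ m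
        * exp (-(π * exp (-t))) := by
    intro t
    have hexp : exp (-2 * π * cosh t) * exp (π * exp t - 9 * t / 4)
        = exp (-(t / 4)) * exp (-(2 * (t / m))) ^ m * exp (-(π * exp (-t))) := by
      rw [← Real.exp_nat_mul, ← Real.exp_add, ← Real.exp_add, ← Real.exp_add, Real.cosh_eq]
      congr 1
      field_simp
      ring
    calc PhiS3' m a t * exp (π * exp t - 9 * t / 4)
        = 4 * π ^ 2 * cosh (t / 4) * (4 * cosh (t / m) ^ 2 - 4 * a ^ 2) ^ m
            * (exp (-2 * π * cosh t) * exp (π * exp t - 9 * t / 4)) := by rw [PhiS3']; ring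
      _ = _ := by rw [hexp, mul_pow]; ring
  simp only [key]
  have hdiv4 : Tendsto (fun t : ℝ => t / 4) atTop atTop :=
    Tendsto.atTop_div_const (by norm_num) tendsto_id
  have hdivm : Tendsto (fun t : ℝ => t / m) atTop atTop :=
    Tendsto.atTop_div_const hmpos tendsto_id
  have l1 : Tendsto (fun t : ℝ => cosh (t / 4) * exp (-(t / 4))) atTop (nhds (1 / 2)) := by
    simp only [cosh_mul_exp_neg]
    have : Tendsto (fun t : ℝ => exp (-(2 * (t / 4)))) atTop (nhds 0) :=
      tendsto_exp_neg_comp (hdiv4.const_mul_atTop (by norm_num))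
    have := (this.const_add 1).div_const 2
    simpa using this
  have hexp2m : Tendsto (fun t : ℝ => exp (-(2 * (t / m)))) atTop (nhds 0) :=
    tendsto_exp_neg_comp (hdivm.const_mul_atTop (by norm_num))
  have l2 : Tendsto (fun t : ℝ => (4 * cosh (t / m) ^ 2 - 4 * a ^ 2) * exp (-(2 * (t / m))))
      atTop (nhds 1) := by
    have hrw : ∀ t : ℝ, (4 * cosh (t / m) ^ 2 - 4 * a ^ 2) * exp (-(2 * (t / m)))
        = (1 + exp (-(2 * (t / m)))) ^ 2 - 4 * a ^ 2 * exp (-(2 * (t / m))) := by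
      intro t
      have h := cosh_mul_exp_neg (t / m)
      have h2 : (cosh (t / m) * exp (-(t / m))) ^ 2 = ((1 + exp (-(2 * (t / m)))) / 2) ^ 2 := by
        rw [h]
      have hee : exp (-(t / m)) ^ 2 = exp (-(2 * (t / m))) := by
        rw [sq, ← Real.exp_add]; ring_nf
      nlinarith [hee, h2]
    simp only [hrw]
    have lim1 : Tendsto (fun t : ℝ => (1 + exp (-(2 * (t / m)))) ^ 2) atTop (nhds 1) := by
      have := ((hexp2m.const_add 1).pow 2)
      simpa using this
    have lim2 : Tendsto (fun t : ℝ => 4 * a ^ 2 * exp (-(2 * (t / m)))) atTop (nhds 0) := by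
      simpa using hexp2m.const_mul (4 * a ^ 2)
    simpa using lim1.sub lim2
  have l3 : Tendsto (fun t : ℝ => exp (-(π * exp (-t)))) atTop (nhds 1) := by
    have h0 : Tendsto (fun t : ℝ => -(π * exp (-t))) atTop (nhds 0) := by
      have := (tendsto_exp_neg_comp (tendsto_id : Tendsto (fun t : ℝ => t) atTop atTop)).const_mul π
      simpa using this.neg
    have := (Real.continuous_exp.tendsto 0).comp h0
    simpa [Function.comp_def] using this
  have := (((l1.const_mul (4 * π ^ 2)).mul (l2.pow m)).mul l3)
  have h2 : 4 * π ^ 2 * (1 / 2) * 1 ^ m * 1 = 2 * π ^ 2 := by simp; ring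
  rw [h2] at this
  exact this.congr (fun t => by ring)

noncomputable def Ctail : ℝ := ∑' n : ℕ, ((n : ℝ) + 2) ^ 4 * (1 / 2 : ℝ) ^ (n + 2)

lemma summable_Ctail : Summable (fun n : ℕ => ((n : ℝ) + 2) ^ 4 * (1 / 2 : ℝ) ^ (n + 2)) := by
  have h := (summable_nat_add_iff 1).2 (summable_aux (1 / 2) (by norm_num) (by norm_num))
  exact h.congr (fun n => by push_cast; ring)

lemma Ctail_nonneg : 0 ≤ Ctail :=
  tsum_nonneg (fun n => by positivity)

lemma term0_mul (t : ℝ) :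
    phiTerm t 0 * exp (π * exp t - 9 * t / 4) = 2 * π ^ 2 - 3 * π * exp (-t) := by
  have h1 : exp (-π * ((0:ℕ) + 1 : ℝ) ^ 2 * exp t) * exp (π * exp t - 9 * t / 4)
      = exp (-(9 * t / 4)) := by
    rw [← Real.exp_add]; norm_num; ring_nf
  have e1 : exp (9 * t / 4) * exp (-(9 * t / 4)) = 1 := by rw [← Real.exp_add]; simp
  have e2 : exp (5 * t / 4) * exp (-(9 * t / 4)) = exp (-t) := by
    rw [← Real.exp_add]; ring_nf
  calc phiTerm t 0 * exp (π * exp t - 9 * t / 4)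
      = (2 * π ^ 2 * exp (9 * t / 4) - 3 * π * exp (5 * t / 4))
          * (exp (-π * ((0:ℕ) + 1 : ℝ) ^ 2 * exp t) * exp (π * exp t - 9 * t / 4)) := by
        rw [phiTerm]; push_cast; ring
    _ = 2 * π ^ 2 * (exp (9 * t / 4) * exp (-(9 * t / 4)))
          - 3 * π * (exp (5 * t / 4) * exp (-(9 * t / 4))) := by rw [h1]; ring
    _ = 2 * π ^ 2 - 3 * π * exp (-t) := by rw [e1, e2]; ring

lemma x_le_half (t : ℝ) (ht : 0 ≤ t) : exp (-π * exp t) ≤ 1 / 2 := by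
  have h1 : (1:ℝ) ≤ exp t := Real.one_le_exp ht
  have hpi : (3:ℝ) ≤ π := by linarith [Real.pi_gt_three]
  have hle : -π * exp t ≤ -1 := by nlinarith
  calc exp (-π * exp t) ≤ exp (-1) := exp_le_exp.2 hle
    _ ≤ 1 / 2 := by
      have h2 : (2:ℝ) ≤ exp 1 := by linarith [Real.add_one_le_exp 1]
      have h3 : exp (-1 : ℝ) * exp 1 = 1 := by rw [← Real.exp_add]; simp
      nlinarith [exp_pos (-1 : ℝ)]

lemma tail_term_bound (t : ℝ) (ht : 0 ≤ t) (n : ℕ) :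
    |phiTerm t (n + 1)| * exp (π * exp t - 9 * t / 4)
      ≤ 5 * π ^ 2 * (((n : ℝ) + 2) ^ 4 * (1 / 2 : ℝ) ^ (n + 2)) * exp (-π * exp t) := by
  set x := exp (-π * exp t) with hxdef
  have hx0 : 0 < x := exp_pos _
  have hx1 : x ≤ 1 / 2 := x_le_half t ht
  have hpi : (3:ℝ) ≤ π := by linarith [Real.pi_gt_three]
  set p : ℝ := (n : ℝ) + 2 with hp
  have hp1 : (2:ℝ) ≤ p := by rw [hp]; linarith [Nat.cast_nonneg (α := ℝ) n]
  have hp0 : (0:ℝ) < p := by linarith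
  have hE2 : exp (5 * t / 4) ≤ exp (9 * t / 4) := exp_le_exp.2 (by linarith)
  have hp24 : p ^ 2 ≤ p ^ 4 := pow_le_pow_right₀ (by linarith) (by norm_num)
  -- |A| ≤ 5π² p⁴ e^{9t/4}
  have habs : |2 * π ^ 2 * p ^ 4 * exp (9 * t / 4) - 3 * π * p ^ 2 * exp (5 * t / 4)|
      ≤ 5 * π ^ 2 * p ^ 4 * exp (9 * t / 4) := by
    have e1 := exp_pos (9 * t / 4)
    have e2 := exp_pos (5 * t / 4)
    rw [abs_sub_le_iff]
    have key1 : 3 * π * p ^ 2 * exp (5 * t / 4) ≤ 3 * π ^ 2 * p ^ 4 * exp (9 * t / 4) := by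
      have : π * (p ^ 2 * exp (5 * t / 4)) ≤ π ^ 2 * (p ^ 4 * exp (9 * t / 4)) := by
        apply mul_le_mul (by nlinarith) (mul_le_mul hp24 hE2 e2.le (by positivity)) (by positivity) (by positivity)
      nlinarith
    constructor
    · nlinarith [mul_pos (mul_pos (by positivity : (0:ℝ) < 3 * π) (pow_pos hp0 2)) e2]
    · nlinarith [mul_pos (mul_pos (by positivity : (0:ℝ) < 2 * π ^ 2) (pow_pos hp0 4)) e1]
  -- exponential part
  have hBE : exp (9 * t / 4) * (exp (-π * p ^ 2 * exp t) * exp (π * exp t - 9 * t / 4))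
      = x ^ ((n + 2) ^ 2 - 1) := by
    rw [← Real.exp_add, ← Real.exp_add, hxdef, ← Real.exp_nat_mul]
    congr 1
    have hcast : (((n + 2) ^ 2 - 1 : ℕ) : ℝ) = p ^ 2 - 1 := by
      have h2 : 1 ≤ (n + 2) ^ 2 := Nat.one_le_pow 2 (n + 2) (by omega)
      rw [Nat.cast_sub h2]
      simp only [hp]
      push_cast
      ring
    rw [hcast]
    ring
  have hxpow : x ^ ((n + 2) ^ 2 - 1) ≤ x * (1 / 2 : ℝ) ^ (n + 2) := by
    calc x ^ ((n + 2) ^ 2 - 1) ≤ x ^ (n + 3) :=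
          pow_le_pow_of_le_one hx0.le (by linarith)
            (by have h : (n + 2) ^ 2 = n * n + 4 * n + 4 := by ring
                omega)
      _ = x * x ^ (n + 2) := by ring
      _ ≤ x * (1 / 2 : ℝ) ^ (n + 2) := by
          apply mul_le_mul_of_nonneg_left _ hx0.le
          exact pow_le_pow_left₀ hx0.le hx1 _
  -- assemble
  have hterm : |phiTerm t (n + 1)| * exp (π * exp t - 9 * t / 4)
      ≤ (5 * π ^ 2 * p ^ 4) * (exp (9 * t / 4) * (exp (-π * p ^ 2 * exp t) * exp (π * exp t - 9 * t / 4))) := by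
    have hform : phiTerm t (n + 1)
        = (2 * π ^ 2 * p ^ 4 * exp (9 * t / 4) - 3 * π * p ^ 2 * exp (5 * t / 4))
            * exp (-π * p ^ 2 * exp t) := by
      rw [phiTerm, hp]; push_cast; ring_nf
    rw [hform, abs_mul, abs_of_pos (exp_pos _)]
    calc |2 * π ^ 2 * p ^ 4 * exp (9 * t / 4) - 3 * π * p ^ 2 * exp (5 * t / 4)|
          * exp (-π * p ^ 2 * exp t) * exp (π * exp t - 9 * t / 4)
        ≤ (5 * π ^ 2 * p ^ 4 * exp (9 * t / 4)) * exp (-π * p ^ 2 * exp t) * exp (π * exp t - 9 * t / 4) := by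
          apply mul_le_mul_of_nonneg_right _ (exp_pos _).le
          exact mul_le_mul_of_nonneg_right habs (exp_pos _).le
      _ = (5 * π ^ 2 * p ^ 4) * (exp (9 * t / 4) * (exp (-π * p ^ 2 * exp t) * exp (π * exp t - 9 * t / 4))) := by ring
  calc |phiTerm t (n + 1)| * exp (π * exp t - 9 * t / 4)
      ≤ (5 * π ^ 2 * p ^ 4) * x ^ ((n + 2) ^ 2 - 1) := by rw [← hBE]; exact hterm
    _ ≤ (5 * π ^ 2 * p ^ 4) * (x * (1 / 2 : ℝ) ^ (n + 2)) :=
        mul_le_mul_of_nonneg_left hxpow (by positivity)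
    _ = 5 * π ^ 2 * (p ^ 4 * (1 / 2 : ℝ) ^ (n + 2)) * x := by ring

set_option maxHeartbeats 1000000 in
lemma tendsto_Phi_norm :
    Tendsto (fun t : ℝ => (∑' n : ℕ, phiTerm t n) * exp (π * exp t - 9 * t / 4))
      atTop (nhds (2 * π ^ 2)) := by
  have hdecomp : ∀ t : ℝ, (∑' n : ℕ, phiTerm t n) * exp (π * exp t - 9 * t / 4)
      = (2 * π ^ 2 - 3 * π * exp (-t))
        + (∑' n : ℕ, phiTerm t (n + 1)) * exp (π * exp t - 9 * t / 4) := by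
    intro t
    rw [Summable.tsum_eq_zero_add (summable_phiTerm t), add_mul, term0_mul]
  have l1 : Tendsto (fun t : ℝ => 2 * π ^ 2 - 3 * π * exp (-t)) atTop (nhds (2 * π ^ 2)) := by
    have h0 : Tendsto (fun t : ℝ => 3 * π * exp (-t)) atTop (nhds 0) := by
      simpa using (tendsto_exp_neg_comp (tendsto_id : Tendsto (fun t : ℝ => t) atTop atTop)).const_mul (3 * π)
    simpa using (tendsto_const_nhds (x := 2 * π ^ 2) (f := atTop)).sub h0
  have hg0 : Tendsto (fun t : ℝ => 5 * π ^ 2 * Ctail * exp (-π * exp t)) atTop (nhds 0) := by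
    have h1 : Tendsto (fun t : ℝ => π * exp t) atTop atTop :=
      (Real.tendsto_exp_atTop).const_mul_atTop Real.pi_pos
    have h2 : Tendsto (fun t : ℝ => exp (-π * exp t)) atTop (nhds 0) := by
      have := tendsto_exp_neg_comp h1
      simpa [neg_mul] using this
    simpa using h2.const_mul (5 * π ^ 2 * Ctail)
  have l2 : Tendsto (fun t : ℝ => (∑' n : ℕ, phiTerm t (n + 1)) * exp (π * exp t - 9 * t / 4))
      atTop (nhds 0) := by
    apply squeeze_zero_norm' _ hg0
    filter_upwards [eventually_ge_atTop (0 : ℝ)] with t ht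
    have hE : (0:ℝ) < exp (π * exp t - 9 * t / 4) := exp_pos _
    have hs : Summable (fun n : ℕ => phiTerm t (n + 1)) :=
      (summable_nat_add_iff 1).2 (summable_phiTerm t)
    have hsa : Summable (fun n : ℕ => |phiTerm t (n + 1)|) := hs.abs
    have habs_tsum : |∑' n : ℕ, phiTerm t (n + 1)| ≤ ∑' n : ℕ, |phiTerm t (n + 1)| := by
      have h := norm_tsum_le_tsum_norm (f := fun n : ℕ => phiTerm t (n + 1))
        (hsa.congr (fun n => (Real.norm_eq_abs _).symm))
      simpa [Real.norm_eq_abs] using h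
    have hRHSsum : Summable (fun n : ℕ =>
        5 * π ^ 2 * (((n : ℝ) + 2) ^ 4 * (1 / 2 : ℝ) ^ (n + 2)) * exp (-π * exp t)) :=
      (summable_Ctail.mul_left (5 * π ^ 2)).mul_right _
    calc ‖(∑' n : ℕ, phiTerm t (n + 1)) * exp (π * exp t - 9 * t / 4)‖
        = |∑' n : ℕ, phiTerm t (n + 1)| * exp (π * exp t - 9 * t / 4) := by
          rw [Real.norm_eq_abs, abs_mul, abs_of_pos hE]
      _ ≤ (∑' n : ℕ, |phiTerm t (n + 1)|) * exp (π * exp t - 9 * t / 4) := by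
          exact mul_le_mul_of_nonneg_right habs_tsum hE.le
      _ = ∑' n : ℕ, |phiTerm t (n + 1)| * exp (π * exp t - 9 * t / 4) := by
          rw [tsum_mul_right]
      _ ≤ ∑' n : ℕ, 5 * π ^ 2 * (((n : ℝ) + 2) ^ 4 * (1 / 2 : ℝ) ^ (n + 2)) * exp (-π * exp t) :=
          Summable.tsum_le_tsum (fun n => tail_term_bound t ht n) (hsa.mul_right _) hRHSsum
      _ = 5 * π ^ 2 * Ctail * exp (-π * exp t) := by
          rw [tsum_mul_right, tsum_mul_left, Ctail]
  have := l1.add l2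
  rw [add_zero] at this
  exact this.congr (fun t => (hdecomp t).symm)

/-- **Theorem 3(A) of the paper.** For `m ≥ 1` and `0 < a < 1`,
`Φ_{S3}(m,a;t)/Φ(t) → 1` as `t → +∞`. -/
theorem PhiS3_asymptotic_Phi (m : ℕ) (hm : 1 ≤ m) (a : ℝ) (ha0 : 0 < a) (ha1 : a < 1) :
    Tendsto (fun t : ℝ => PhiS3 m a t / Phi t) atTop (nhds 1) := by
  have hPhi : ∀ t, Phi t = ∑' n : ℕ, phiTerm t n := fun t => rfl
  have hPhiS3 : ∀ t, PhiS3 m a t = PhiS3' m a t := fun t => rfl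
  have hne : (2 * π ^ 2 : ℝ) ≠ 0 := by positivity
  have hdiv := (tendsto_PhiS3_norm m hm a).div tendsto_Phi_norm hne
  rw [div_self hne] at hdiv
  refine hdiv.congr (fun t => ?_)
  show PhiS3' m a t * exp (π * exp t - 9 * t / 4)
      / ((∑' n : ℕ, phiTerm t n) * exp (π * exp t - 9 * t / 4)) = PhiS3 m a t / Phi t
  rw [mul_div_mul_right _ _ (exp_ne_zero _), hPhi, hPhiS3]
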